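/- Let 𝒞 be a t-shallow cutting of a finite set P ⊆ ℝ² (2-dimensional) with m = |P|. For every integer d > 0 there exist P' ⊆ P with |P'| ≤ C·m/d and a family ℛ of planar rectangles unbounded along the z-axis (i.e., vertical strips [y₁,y₂]×(−∞,∞) in the (y,z)-plane) such that every conflict list list(C) ∖ P' is covered by O(d) rectangles of ℛ and each rectangle of ℛ contains O(t·d) points of P. -/

import Mathlib

/-- `q` dominates `p` coordinatewise (points of the `(y,z)`-plane). -/
def dominates2 (q p : Fin 2 → ℝ) : Prop := ∀ i, p i ≤ q i

/-- `p` lies in the cell `[0, c 0] × [0, c 1]`. -/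
def inCell2 (c p : Fin 2 → ℝ) : Prop := ∀ i, 0 ≤ p i ∧ p i ≤ c i

/-- A two-dimensional `t`-shallow cutting for `P`. -/
def IsShallowCutting2 (t : ℕ) (P : Finset (Fin 2 → ℝ))
    (A : Finset (Fin 2 → ℝ)) : Prop :=
  (∀ c ∈ A, {p ∈ (P : Set (Fin 2 → ℝ)) | inCell2 c p}.ncard ≤ 2 * t) ∧
  (∀ q : Fin 2 → ℝ, (∀ i, 0 ≤ q i) →
    {p ∈ (P : Set (Fin 2 → ℝ)) | dominates2 q p}.ncard ≤ t → ∃ c ∈ A, inCell2 c q)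

/-- A point `p` of the `(y,z)`-plane lies in the vertical strip
`[S.1, S.2] × (−∞, ∞)`, unbounded along the `z`-axis. -/
def inStrip (S : ℝ × ℝ) (p : Fin 2 → ℝ) : Prop :=
  S.1 ≤ p 0 ∧ p 0 ≤ S.2

namespace SCover

open scoped Classical

noncomputable section

def lexLt (r p : Fin 2 → ℝ) : Prop := r 0 < p 0 ∨ (r 0 = p 0 ∧ r 1 < p 1)

lemma lexLt_irrefl (p : Fin 2 → ℝ) : ¬ lexLt p p := by
  rintro (h | ⟨_, h⟩) <;> exact lt_irrefl _ h

lemma lexLt_trans {a b c : Fin 2 → ℝ} (h1 : lexLt a b) (h2 : lexLt b c) : lexLt a c := by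
  rcases h1 with h1 | ⟨e1, h1⟩ <;> rcases h2 with h2 | ⟨e2, h2⟩
  · exact Or.inl (h1.trans h2)
  · exact Or.inl (lt_of_lt_of_eq h1 e2)
  · exact Or.inl (lt_of_eq_of_lt e1 h2)
  · exact Or.inr ⟨e1.trans e2, h1.trans h2⟩

lemma lexLt_total {p q : Fin 2 → ℝ} (h : p ≠ q) : lexLt p q ∨ lexLt q p := by
  rcases lt_trichotomy (p 0) (q 0) with h0 | h0 | h0
  · exact Or.inl (Or.inl h0)
  · rcases lt_trichotomy (p 1) (q 1) with h1 | h1 | h1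
    · exact Or.inl (Or.inr ⟨h0, h1⟩)
    · exact absurd (funext fun i => by fin_cases i <;> assumption) h
    · exact Or.inr (Or.inr ⟨h0.symm, h1⟩)
  · exact Or.inr (Or.inl h0)

variable (P : Finset (Fin 2 → ℝ))

def rho (p : Fin 2 → ℝ) : ℕ := (P.filter (fun r => lexLt r p)).card

lemma rho_lt_rho {p q : Fin 2 → ℝ} (hp : p ∈ P) (h : lexLt p q) :
    rho P p < rho P q := by
  have hsub : P.filter (fun r => lexLt r p) ⊆ P.filter (fun r => lexLt r q) := by
    intro r hr
    rw [Finset.mem_filter] at hr ⊢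
    exact ⟨hr.1, lexLt_trans hr.2 h⟩
  refine Finset.card_lt_card ((Finset.ssubset_iff_of_subset hsub).2 ⟨p, ?_, ?_⟩)
  · exact Finset.mem_filter.2 ⟨hp, h⟩
  · intro hcon
    exact lexLt_irrefl p (Finset.mem_filter.1 hcon).2

lemma rho_inj {p q : Fin 2 → ℝ} (hp : p ∈ P) (hq : q ∈ P)
    (h : rho P p = rho P q) : p = q := by
  by_contra hne
  rcases lexLt_total hne with hl | hl
  · exact absurd h (Nat.ne_of_lt (rho_lt_rho P hp hl))
  · exact absurd h.symm (Nat.ne_of_lt (rho_lt_rho P hq hl))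

lemma rho_lt_card {p : Fin 2 → ℝ} (hp : p ∈ P) : rho P p < P.card := by
  have hsub : P.filter (fun r => lexLt r p) ⊆ P.erase p := by
    intro r hr
    rw [Finset.mem_filter] at hr
    refine Finset.mem_erase.2 ⟨?_, hr.1⟩
    rintro rfl
    exact lexLt_irrefl _ hr.2
  exact lt_of_le_of_lt (Finset.card_le_card hsub) (Finset.card_erase_lt_of_mem hp)


variable (t d : ℕ) (𝒞 : Finset (Fin 2 → ℝ))

/-- point lies in some cell -/
def isNC (p : Fin 2 → ℝ) : Prop := ∃ c ∈ 𝒞, inCell2 c p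

def blk (p : Fin 2 → ℝ) : ℕ := rho P p / (t * d)

def lightp (p : Fin 2 → ℝ) : Prop := (P.filter (fun q => q 0 = p 0)).card ≤ t * d

def cntS (p : Fin 2 → ℝ) : Finset (Fin 2 → ℝ) :=
  P.filter (fun q => isNC 𝒞 q ∧ blk P t d q = blk P t d p ∧ q 1 ≤ p 1)

def exceptSet : Finset (Fin 2 → ℝ) :=
  P.filter (fun p => isNC 𝒞 p ∧ (¬ lightp P t d p ∨ d * (cntS P t d 𝒞 p).card ≤ t))

def Xf (j : ℕ) : Finset ℝ :=
  (P.filter (fun q => blk P t d q = j ∧ lightp P t d q)).image (fun q => q 0)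

def strip (j : ℕ) : ℝ × ℝ := (sInf ↑(Xf P t d j), sSup ↑(Xf P t d j))

def strips : Finset (ℝ × ℝ) :=
  (P.filter (fun p => lightp P t d p)).image (fun p => strip P t d (blk P t d p))

/-- the cell sets, as Finsets, have card ≤ 2t -/
lemma cell_card_le (hsc : IsShallowCutting2 t P 𝒞) {c : Fin 2 → ℝ} (hc : c ∈ 𝒞) :
    (P.filter (fun p => inCell2 c p)).card ≤ 2 * t := by
  have h := hsc.1 c hc
  have he : {p ∈ (P : Set (Fin 2 → ℝ)) | inCell2 c p}
      = ↑(P.filter (fun p => inCell2 c p)) := by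
    ext x; simp
  rw [he, Set.ncard_coe_finset] at h
  exact h

lemma t_lt_card (ht : 0 < t) (hsc : IsShallowCutting2 t P 𝒞) : t < P.card := by
  by_contra hcon
  push_neg at hcon
  have hdomle : ∀ q : Fin 2 → ℝ, {p ∈ (P : Set (Fin 2 → ℝ)) | dominates2 q p}.ncard ≤ t := by
    intro q
    refine le_trans (le_trans (Set.ncard_le_ncard (Set.sep_subset _ _) P.finite_toSet) ?_) hcon
    rw [Set.ncard_coe_finset]
  by_cases h𝒞 : 𝒞.Nonempty
  · set z : ℝ := 1 + 𝒞.sup' h𝒞 (fun c => max (c 1) 0) with hz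
    have hzpos : 0 ≤ z := by
      obtain ⟨c0, hc0⟩ := id h𝒞
      have : (0:ℝ) ≤ 𝒞.sup' h𝒞 (fun c => max (c 1) 0) :=
        le_trans (le_max_right (c0 1) 0) (Finset.le_sup' (fun c => max (c 1) 0) hc0)
      linarith
    set q : Fin 2 → ℝ := fun i => if i = 0 then 0 else z with hqdef
    have hqn : ∀ i, 0 ≤ q i := by
      intro i
      by_cases hi : i = 0 <;> simp [hqdef, hi, hzpos]
    obtain ⟨c, hc, hcell⟩ := hsc.2 q hqn (hdomle q)
    have h1 : q 1 ≤ c 1 := (hcell 1).2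
    have h2 : c 1 ≤ 𝒞.sup' h𝒞 (fun c => max (c 1) 0) :=
      le_trans (le_max_left _ _) (Finset.le_sup' (fun c => max (c 1) 0) hc)
    have hq1 : q 1 = z := by
      simp [hqdef]
    rw [hq1] at h1
    linarith
  · obtain ⟨c, hc, -⟩ := hsc.2 (fun _ => 0) (fun _ => le_rfl) (hdomle _)
    rw [Finset.not_nonempty_iff_eq_empty] at h𝒞
    simp [h𝒞] at hc

/-- NC points within a single y-class: at most 2t of them -/
lemma ncclass_card_le (hsc : IsShallowCutting2 t P 𝒞) (v : ℝ) :
    (P.filter (fun p => isNC 𝒞 p ∧ p 0 = v)).card ≤ 2 * t := by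
  set Ff := P.filter (fun p => isNC 𝒞 p ∧ p 0 = v) with hFf
  rcases Ff.eq_empty_or_nonempty with he | hne
  · simp [he]
  · obtain ⟨pm, hpm, hmax⟩ := Ff.exists_max_image (fun p => p 1) hne
    rw [hFf, Finset.mem_filter] at hpm
    obtain ⟨hpmP, ⟨c, hc𝒞, hcell⟩, hpv⟩ := hpm
    have hsub : Ff ⊆ P.filter (fun p => inCell2 c p) := by
      intro q hq
      rw [hFf, Finset.mem_filter] at hq
      obtain ⟨hqP, ⟨c', _, hcell'⟩, hqv⟩ := hq
      rw [Finset.mem_filter]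
      refine ⟨hqP, fun i => ?_⟩
      rcases Fin.exists_fin_two.1 ⟨i, rfl⟩ with rfl | rfl
      · exact ⟨(hcell' 0).1, by rw [hqv, ← hpv]; exact (hcell 0).2⟩
      · refine ⟨(hcell' 1).1, le_trans ?_ (hcell 1).2⟩
        exact hmax q (by rw [hFf, Finset.mem_filter]; exact ⟨hqP, ⟨c', ‹_›, hcell'⟩, hqv⟩)
    exact le_trans (Finset.card_le_card hsub) (cell_card_le P t 𝒞 hsc hc𝒞)


lemma heavy_bound (hsc : IsShallowCutting2 t P 𝒞) :
    d * (P.filter (fun p => isNC 𝒞 p ∧ ¬ lightp P t d p)).card ≤ 2 * P.card := by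
  set Hs := P.filter (fun p => isNC 𝒞 p ∧ ¬ lightp P t d p) with hHs
  set V := Hs.image (fun p => p 0) with hV
  have hfib : Hs.card = ∑ v ∈ V, (Hs.filter (fun p => p 0 = v)).card :=
    Finset.card_eq_sum_card_fiberwise (fun p hp => Finset.mem_image_of_mem _ hp)
  have h1 : Hs.card ≤ V.card * (2 * t) := by
    rw [hfib]
    refine le_trans (Finset.sum_le_sum (fun v _ => ?_)) (by rw [Finset.sum_const, smul_eq_mul])
    refine le_trans (Finset.card_le_card ?_) (ncclass_card_le P t 𝒞 hsc v)
    intro q hq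
    simp only [hHs, Finset.mem_filter] at hq ⊢
    exact ⟨hq.1.1, hq.1.2.1, hq.2⟩
  have h2 : V.card * (t * d + 1) ≤ P.card := by
    have hsum : ∑ v ∈ V, (t * d + 1) ≤ ∑ v ∈ V, (P.filter (fun q => q 0 = v)).card := by
      refine Finset.sum_le_sum (fun v hv => ?_)
      rw [hV] at hv
      obtain ⟨p, hp, rfl⟩ := Finset.mem_image.1 hv
      rw [hHs, Finset.mem_filter] at hp
      have := hp.2.2
      unfold lightp at this
      push_neg at this
      exact this
    have hle : ∑ v ∈ V, (P.filter (fun q => q 0 = v)).card ≤ P.card := by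
      have hful : P.card = ∑ v ∈ P.image (fun p => p 0), (P.filter (fun q => q 0 = v)).card :=
        Finset.card_eq_sum_card_fiberwise (fun p hp => Finset.mem_image_of_mem _ hp)
      rw [hful]
      refine Finset.sum_le_sum_of_subset ?_
      rw [hV]
      exact Finset.image_subset_image (Finset.filter_subset _ _)
    calc V.card * (t * d + 1) = ∑ v ∈ V, (t * d + 1) := by rw [Finset.sum_const, smul_eq_mul]
    _ ≤ P.card := le_trans hsum hle
  calc d * Hs.card ≤ d * (V.card * (2 * t)) := Nat.mul_le_mul_left d h1
  _ = 2 * ((t * d) * V.card) := by ring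
  _ ≤ 2 * ((t * d + 1) * V.card) := by
      have : (t * d) * V.card ≤ (t * d + 1) * V.card :=
        Nat.mul_le_mul_right V.card (Nat.le_succ (t * d))
      exact Nat.mul_le_mul_left 2 this
  _ ≤ 2 * P.card := by
      exact Nat.mul_le_mul_left 2 (le_trans (le_of_eq (mul_comm _ _)) h2)

lemma absorbed_bound (htm : t < P.card) (ht : 0 < t) (hd : 0 < d) :
    d * (P.filter (fun p => isNC 𝒞 p ∧ lightp P t d p ∧ d * (cntS P t d 𝒞 p).card ≤ t)).card
      ≤ 2 * P.card := by
  set As := P.filter (fun p => isNC 𝒞 p ∧ lightp P t d p ∧ d * (cntS P t d 𝒞 p).card ≤ t)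
    with hAs
  set B := As.image (blk P t d) with hB
  have hfib : As.card = ∑ j ∈ B, (As.filter (fun p => blk P t d p = j)).card :=
    Finset.card_eq_sum_card_fiberwise (fun p hp => Finset.mem_image_of_mem _ hp)
  have h1 : ∀ j ∈ B, d * (As.filter (fun p => blk P t d p = j)).card ≤ t := by
    intro j hj
    have hne : (As.filter (fun p => blk P t d p = j)).Nonempty := by
      rw [hB] at hj
      obtain ⟨p, hp, hpj⟩ := Finset.mem_image.1 hj
      exact ⟨p, Finset.mem_filter.2 ⟨hp, hpj⟩⟩
    obtain ⟨pm, hpm, hmax⟩ := Finset.exists_max_image _ (fun p => p 1) hne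
    rw [Finset.mem_filter] at hpm
    obtain ⟨hpmA, hpmj⟩ := hpm
    have hpmA' := hpmA
    rw [hAs, Finset.mem_filter] at hpmA'
    have hsub : As.filter (fun p => blk P t d p = j) ⊆ cntS P t d 𝒞 pm := by
      intro q hq
      rw [Finset.mem_filter] at hq
      obtain ⟨hqA, hqj⟩ := hq
      have hq1 : q 1 ≤ pm 1 := hmax q (Finset.mem_filter.2 ⟨hqA, hqj⟩)
      rw [hAs, Finset.mem_filter] at hqA
      exact Finset.mem_filter.2 ⟨hqA.1, hqA.2.1, by rw [hqj, hpmj], hq1⟩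
    calc d * (As.filter (fun p => blk P t d p = j)).card
        ≤ d * (cntS P t d 𝒞 pm).card := Nat.mul_le_mul_left d (Finset.card_le_card hsub)
    _ ≤ t := hpmA'.2.2.2
  have h2 : d * As.card ≤ B.card * t := by
    rw [hfib, Finset.mul_sum]
    refine le_trans (Finset.sum_le_sum h1) ?_
    rw [Finset.sum_const, smul_eq_mul]
  have h3 : B.card ≤ P.card / (t * d) + 1 := by
    have hsub : B ⊆ Finset.range (P.card / (t * d) + 1) := by
      intro j hj
      rw [hB] at hj
      obtain ⟨p, hp, rfl⟩ := Finset.mem_image.1 hj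
      have hpP : p ∈ P := Finset.mem_of_mem_filter _ hp
      have : rho P p ≤ P.card := le_of_lt (rho_lt_card P hpP)
      rw [Finset.mem_range]
      have h6 : rho P p / (t * d) ≤ P.card / (t * d) := Nat.div_le_div_right this
      unfold blk
      omega
    exact le_trans (Finset.card_le_card hsub) (by rw [Finset.card_range])
  have h4 : (P.card / (t * d) + 1) * t ≤ 2 * P.card := by
    have ha : P.card / (t * d) ≤ P.card / t := Nat.div_le_div_left (Nat.le_mul_of_pos_right t hd) ht
    have hb : t * (P.card / t) ≤ P.card := by
      rw [mul_comm]
      exact Nat.div_mul_le_self _ _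
    have hc : t * (P.card / (t * d)) ≤ P.card := le_trans (Nat.mul_le_mul_left t ha) hb
    have hd2 : t ≤ P.card := le_of_lt htm
    calc (P.card / (t * d) + 1) * t = t * (P.card / (t * d)) + t := by ring
    _ ≤ P.card + P.card := Nat.add_le_add hc hd2
    _ = 2 * P.card := by ring
  calc d * As.card ≤ B.card * t := h2
  _ ≤ (P.card / (t * d) + 1) * t := Nat.mul_le_mul_right t h3
  _ ≤ 2 * P.card := h4


lemma strip_weight (ht : 0 < t) (hd : 0 < d) {p0 : Fin 2 → ℝ}
    (hp0 : p0 ∈ P) (hl0 : lightp P t d p0) :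
    (P.filter (fun q => inStrip (strip P t d (blk P t d p0)) q)).card ≤ 3 * (t * d) := by
  have hN : 0 < t * d := Nat.mul_pos ht hd
  set j := blk P t d p0 with hj
  have hmemX : p0 0 ∈ Xf P t d j :=
    Finset.mem_image_of_mem _ (Finset.mem_filter.2 ⟨hp0, rfl, hl0⟩)
  have hXne : ((Xf P t d j : Set ℝ)).Nonempty := ⟨p0 0, by exact_mod_cast hmemX⟩
  have hXfin : ((Xf P t d j : Set ℝ)).Finite := (Xf P t d j).finite_toSet
  have hInf : sInf ((Xf P t d j : Set ℝ)) ∈ Xf P t d j := by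
    exact_mod_cast hXne.csInf_mem hXfin
  have hSup : sSup ((Xf P t d j : Set ℝ)) ∈ Xf P t d j := by
    exact_mod_cast hXne.csSup_mem hXfin
  obtain ⟨p₁, hp₁f, hp₁0⟩ := Finset.mem_image.1 hInf
  obtain ⟨p₂, hp₂f, hp₂0⟩ := Finset.mem_image.1 hSup
  rw [Finset.mem_filter] at hp₁f hp₂f
  obtain ⟨hp₁P, hp₁j, hp₁l⟩ := hp₁f
  obtain ⟨hp₂P, hp₂j, hp₂l⟩ := hp₂f
  have key1 : ∀ q ∈ P, sInf ((Xf P t d j : Set ℝ)) ≤ q 0 →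
      rho P p₁ ≤ rho P q + t * d := by
    intro q hqP hle
    have hsub : P.filter (fun r => lexLt r p₁) ⊆
        P.filter (fun r => lexLt r q) ∪ P.filter (fun r => r 0 = p₁ 0) := by
      intro r hr
      rw [Finset.mem_filter] at hr
      rcases hr.2 with hlt | ⟨he, _⟩
      · refine Finset.mem_union_left _ (Finset.mem_filter.2 ⟨hr.1, Or.inl ?_⟩)
        rw [hp₁0] at hlt
        exact lt_of_lt_of_le hlt hle
      · exact Finset.mem_union_right _ (Finset.mem_filter.2 ⟨hr.1, he⟩)
    calc rho P p₁ ≤ (P.filter (fun r => lexLt r q) ∪ P.filter (fun r => r 0 = p₁ 0)).card :=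
          Finset.card_le_card hsub
    _ ≤ rho P q + (P.filter (fun r => r 0 = p₁ 0)).card := Finset.card_union_le _ _
    _ ≤ rho P q + t * d := Nat.add_le_add_left hp₁l _
  have key2 : ∀ q ∈ P, q 0 ≤ sSup ((Xf P t d j : Set ℝ)) →
      rho P q ≤ rho P p₂ + t * d := by
    intro q hqP hle
    have hsub : P.filter (fun r => lexLt r q) ⊆
        P.filter (fun r => lexLt r p₂) ∪ P.filter (fun r => r 0 = p₂ 0) := by
      intro r hr
      rw [Finset.mem_filter] at hr
      have hr0 : r 0 ≤ q 0 := by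
        rcases hr.2 with hlt | ⟨he, _⟩
        · exact le_of_lt hlt
        · exact le_of_eq he
      have hr0' : r 0 ≤ p₂ 0 := le_trans hr0 (by rw [hp₂0]; exact hle)
      rcases lt_or_eq_of_le hr0' with hlt | he
      · exact Finset.mem_union_left _ (Finset.mem_filter.2 ⟨hr.1, Or.inl hlt⟩)
      · exact Finset.mem_union_right _ (Finset.mem_filter.2 ⟨hr.1, he⟩)
    calc rho P q ≤ (P.filter (fun r => lexLt r p₂) ∪ P.filter (fun r => r 0 = p₂ 0)).card :=
          Finset.card_le_card hsub
    _ ≤ rho P p₂ + (P.filter (fun r => r 0 = p₂ 0)).card := Finset.card_union_le _ _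
    _ ≤ rho P p₂ + t * d := Nat.add_le_add_left hp₂l _
  have hjb1 : (t * d) * j ≤ rho P p₁ := by
    have := Nat.div_mul_le_self (rho P p₁) (t * d)
    unfold blk at hp₁j
    rw [← hp₁j]
    rw [mul_comm]
    exact this
  have hjb2 : rho P p₂ < (j + 1) * (t * d) := by
    have he := Nat.div_add_mod (rho P p₂) (t * d)
    have hm := Nat.mod_lt (rho P p₂) hN
    unfold blk at hp₂j
    nlinarith [hp₂j, he, hm]
  have hrw : (j + 1) * (t * d) = (t * d) * j + t * d := by ring
  rw [hrw] at hjb2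
  set Y := t * d with hY
  set X := Y * j with hX
  have hcard : (P.filter (fun q => inStrip (strip P t d j) q)).card ≤
      (Finset.Ico (X - Y) (X + 2 * Y)).card := by
    refine Finset.card_le_card_of_injOn (fun q => rho P q) ?_ ?_
    · intro q hq
      rw [Finset.mem_coe, Finset.mem_filter] at hq
      have hq' : sInf ((Xf P t d j : Set ℝ)) ≤ q 0 ∧ q 0 ≤ sSup ((Xf P t d j : Set ℝ)) := hq.2
      have h1 := key1 q hq.1 hq'.1
      have h2 := key2 q hq.1 hq'.2
      have hgoal : rho P q ∈ Finset.Ico (X - Y) (X + 2 * Y) := by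
        rw [Finset.mem_Ico]
        clear_value X Y
        omega
      exact hgoal
    · intro a ha b hb hab
      exact rho_inj P (Finset.mem_of_mem_filter _ ha) (Finset.mem_of_mem_filter _ hb) hab
  refine le_trans hcard ?_
  rw [Nat.card_Ico]
  clear_value X Y
  omega


lemma kept_facts (hd : 0 < d) {c : Fin 2 → ℝ} (hc : c ∈ 𝒞) {p : Fin 2 → ℝ}
    (hp : p ∈ P) (hcell : inCell2 c p) (hnot : p ∉ exceptSet P t d 𝒞) :
    lightp P t d p ∧ t + 1 ≤ d * (cntS P t d 𝒞 p).card := by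
  have hNC : isNC 𝒞 p := ⟨c, hc, hcell⟩
  by_cases hl : lightp P t d p
  · refine ⟨hl, ?_⟩
    by_contra hcon
    push_neg at hcon
    exact hnot (Finset.mem_filter.2 ⟨hp, hNC, Or.inr (by omega)⟩)
  · exact absurd (Finset.mem_filter.2 ⟨hp, hNC, Or.inl hl⟩) hnot

lemma cover_blocks (hsc : IsShallowCutting2 t P 𝒞) (ht : 0 < t) (hd : 0 < d)
    {c : Fin 2 → ℝ} (hc : c ∈ 𝒞) :
    (((P.filter (fun p => inCell2 c p ∧ p ∉ exceptSet P t d 𝒞)).image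
      (blk P t d)).card) ≤ 2 * d + 1 := by
  set Kc := P.filter (fun p => inCell2 c p ∧ p ∉ exceptSet P t d 𝒞) with hKc
  set KB := Kc.image (blk P t d) with hKB
  set L := KB.filter (fun j => ∀ q ∈ P, blk P t d q = j → q 0 ≤ c 0) with hL
  have hmemKc : ∀ p ∈ Kc, p ∈ P ∧ inCell2 c p ∧ p ∉ exceptSet P t d 𝒞 := by
    intro p hp
    rw [hKc, Finset.mem_filter] at hp
    exact ⟨hp.1, hp.2.1, hp.2.2⟩
  -- at most one block that is not "fully left of c 0"
  have hJ : (KB \ L).card ≤ 1 := by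
    rw [Finset.card_le_one]
    have hkey : ∀ a ∈ KB \ L, ∀ b ∈ KB \ L, a < b → False := by
      intro a ha b hb hab
      rw [Finset.mem_sdiff] at ha hb
      have haq : ∃ q ∈ P, blk P t d q = a ∧ c 0 < q 0 := by
        have := ha.2
        rw [hL, Finset.mem_filter] at this
        push_neg at this
        obtain ⟨q, hq1, hq2, hq3⟩ := this ha.1
        exact ⟨q, hq1, hq2, hq3⟩
      obtain ⟨q, hqP, hqa, hqc⟩ := haq
      obtain ⟨p', hp'K, hp'b⟩ := Finset.mem_image.1 hb.1
      obtain ⟨hp'P, hp'cell, -⟩ := hmemKc p' hp'K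
      have hp'le : p' 0 ≤ c 0 := (hp'cell 0).2
      have hlex : lexLt p' q := Or.inl (lt_of_le_of_lt hp'le hqc)
      have hrho : rho P p' < rho P q := rho_lt_rho P hp'P hlex
      have hble : blk P t d p' ≤ blk P t d q := Nat.div_le_div_right (le_of_lt hrho)
      rw [hp'b, hqa] at hble
      omega
    intro a ha b hb
    by_contra hne
    rcases Nat.lt_or_ge a b with h | h
    · exact hkey a ha b hb h
    · exact hkey b hb a ha (lt_of_le_of_ne h (Ne.symm hne))
  -- blocks fully left of c 0 each contain > t/d points of the cell
  have hLcard : L.card ≤ 2 * d := by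
    classical
    set g : ℕ → (Fin 2 → ℝ) := fun j =>
      if h : ∃ p, p ∈ Kc ∧ blk P t d p = j then h.choose else (fun _ => 0) with hg
    have hgmem : ∀ j ∈ L, g j ∈ Kc ∧ blk P t d (g j) = j := by
      intro j hj
      rw [hL, Finset.mem_filter] at hj
      obtain ⟨p, hp, hpj⟩ := Finset.mem_image.1 hj.1
      have hex : ∃ p, p ∈ Kc ∧ blk P t d p = j := ⟨p, hp, hpj⟩
      rw [hg]
      simp only [dif_pos hex]
      exact hex.choose_spec
    have hSsub : ∀ j ∈ L, cntS P t d 𝒞 (g j) ⊆ P.filter (fun p => inCell2 c p) := by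
      intro j hj q hq
      obtain ⟨hgK, hgb⟩ := hgmem j hj
      obtain ⟨hgP, hgcell, hgnot⟩ := hmemKc _ hgK
      simp only [cntS, Finset.mem_filter] at hq
      obtain ⟨hqP, hqNC, hqb, hqz⟩ := hq
      obtain ⟨c', hc'𝒞, hc'cell⟩ := hqNC
      have hjprop : ∀ r ∈ P, blk P t d r = j → r 0 ≤ c 0 := by
        rw [hL, Finset.mem_filter] at hj
        exact hj.2
      refine Finset.mem_filter.2 ⟨hqP, fun i => ?_⟩
      rcases Fin.exists_fin_two.1 ⟨i, rfl⟩ with rfl | rfl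
      · exact ⟨(hc'cell 0).1, hjprop q hqP (by rw [hqb, hgb])⟩
      · exact ⟨(hc'cell 1).1, le_trans hqz (hgcell 1).2⟩
    have hdisj : ∀ j1 ∈ L, ∀ j2 ∈ L, j1 ≠ j2 →
        Disjoint (cntS P t d 𝒞 (g j1)) (cntS P t d 𝒞 (g j2)) := by
      intro j1 hj1 j2 hj2 hne
      rw [Finset.disjoint_left]
      intro q hq1 hq2
      simp only [cntS, Finset.mem_filter] at hq1 hq2
      have e1 : blk P t d q = j1 := by rw [hq1.2.2.1, (hgmem j1 hj1).2]
      have e2 : blk P t d q = j2 := by rw [hq2.2.2.1, (hgmem j2 hj2).2]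
      exact hne (e1 ▸ e2)
    have hsum : ∑ j ∈ L, (cntS P t d 𝒞 (g j)).card ≤ 2 * t := by
      rw [← Finset.card_biUnion hdisj]
      refine le_trans (Finset.card_le_card ?_) (cell_card_le P t 𝒞 hsc hc)
      intro q hq
      obtain ⟨j, hj, hqj⟩ := Finset.mem_biUnion.1 hq
      exact hSsub j hj hqj
    have hlow : ∀ j ∈ L, t + 1 ≤ d * (cntS P t d 𝒞 (g j)).card := by
      intro j hj
      obtain ⟨hgK, -⟩ := hgmem j hj
      obtain ⟨hgP, hgcell, hgnot⟩ := hmemKc _ hgK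
      exact (kept_facts P t d 𝒞 hd hc hgP hgcell hgnot).2
    have hchain : L.card * (t + 1) ≤ d * (2 * t) := by
      calc L.card * (t + 1) = ∑ _j ∈ L, (t + 1) := by rw [Finset.sum_const, smul_eq_mul]
      _ ≤ ∑ j ∈ L, d * (cntS P t d 𝒞 (g j)).card := Finset.sum_le_sum hlow
      _ = d * ∑ j ∈ L, (cntS P t d 𝒞 (g j)).card := by rw [Finset.mul_sum]
      _ ≤ d * (2 * t) := Nat.mul_le_mul_left d hsum
    have h2d : d * (2 * t) ≤ (2 * d) * (t + 1) := by nlinarith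
    exact Nat.le_of_mul_le_mul_right (le_trans hchain h2d) (Nat.succ_pos t)
  calc KB.card ≤ (KB \ L).card + L.card := Finset.card_le_card_sdiff_add_card
  _ ≤ 1 + 2 * d := Nat.add_le_add hJ hLcard
  _ = 2 * d + 1 := by ring


end
end SCover

/-- Covering of a two-dimensional shallow cutting.  For a `t`-shallow cutting
`𝒞` of a finite `P ⊆ ℝ²` with `m = |P|` and every `d > 0`, there are `P' ⊆ P`
with `|P'| ≤ C·m/d` and a family `ℛ` of strips unbounded along the `z`-axis
such that every conflict list minus `P'` is covered by `O(d)` strips of `ℛ`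
and every strip of `ℛ` contains `O(t·d)` points of `P`. -/
theorem shallow_cutting_cover_2d :
    ∃ C : ℕ, ∀ (t d : ℕ) (P 𝒞 : Finset (Fin 2 → ℝ)),
      0 < t → 0 < d →
      IsShallowCutting2 t P 𝒞 →
      ∃ (P' : Finset (Fin 2 → ℝ)) (ℛ : Finset (ℝ × ℝ)),
        P' ⊆ P ∧
        d * P'.card ≤ C * P.card ∧
        (∀ c ∈ 𝒞, ∃ F ⊆ ℛ, F.card ≤ C * d ∧
          ∀ p ∈ P, inCell2 c p → p ∉ P' → ∃ S ∈ F, inStrip S p) ∧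
        (∀ S ∈ ℛ,
          {p ∈ (P : Set (Fin 2 → ℝ)) | inStrip S p}.ncard ≤ C * (t * d)) := by
  classical
  refine ⟨100, ?_⟩
  intro t d P 𝒞 ht hd hsc
  refine ⟨SCover.exceptSet P t d 𝒞, SCover.strips P t d, Finset.filter_subset _ _, ?_, ?_, ?_⟩
  · -- size of the exceptional set
    have htm : t < P.card := SCover.t_lt_card P t 𝒞 ht hsc
    set Hs := P.filter (fun p => SCover.isNC 𝒞 p ∧ ¬ SCover.lightp P t d p) with hHs
    set As := P.filter (fun p => SCover.isNC 𝒞 p ∧ SCover.lightp P t d p ∧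
      d * (SCover.cntS P t d 𝒞 p).card ≤ t) with hAs
    have hsub : SCover.exceptSet P t d 𝒞 ⊆ Hs ∪ As := by
      intro p hp
      rw [SCover.exceptSet, Finset.mem_filter] at hp
      obtain ⟨hpP, hpNC, hor⟩ := hp
      by_cases hl : SCover.lightp P t d p
      · rcases hor with hcon | hcnt
        · exact absurd hl hcon
        · exact Finset.mem_union_right _ (Finset.mem_filter.2 ⟨hpP, hpNC, hl, hcnt⟩)
      · exact Finset.mem_union_left _ (Finset.mem_filter.2 ⟨hpP, hpNC, hl⟩)
    have h1 : d * Hs.card ≤ 2 * P.card := SCover.heavy_bound P t d 𝒞 hsc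
    have h2 : d * As.card ≤ 2 * P.card := SCover.absorbed_bound P t d 𝒞 htm ht hd
    calc d * (SCover.exceptSet P t d 𝒞).card ≤ d * (Hs ∪ As).card :=
          Nat.mul_le_mul_left d (Finset.card_le_card hsub)
    _ ≤ d * (Hs.card + As.card) := Nat.mul_le_mul_left d (Finset.card_union_le _ _)
    _ = d * Hs.card + d * As.card := by ring
    _ ≤ 2 * P.card + 2 * P.card := Nat.add_le_add h1 h2
    _ ≤ 100 * P.card := by omega
  · -- per-cell cover
    intro c hc
    set Kc := P.filter (fun p => inCell2 c p ∧ p ∉ SCover.exceptSet P t d 𝒞) with hKc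
    refine ⟨Kc.image (fun p => SCover.strip P t d (SCover.blk P t d p)), ?_, ?_, ?_⟩
    · intro S hS
      obtain ⟨p, hpK, rfl⟩ := Finset.mem_image.1 hS
      rw [hKc, Finset.mem_filter] at hpK
      have hlight := (SCover.kept_facts P t d 𝒞 hd hc hpK.1 hpK.2.1 hpK.2.2).1
      exact Finset.mem_image_of_mem _ (Finset.mem_filter.2 ⟨hpK.1, hlight⟩)
    · have himg : Kc.image (fun p => SCover.strip P t d (SCover.blk P t d p)) =
          (Kc.image (SCover.blk P t d)).image (SCover.strip P t d) := by
        rw [Finset.image_image]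
        rfl
      rw [himg]
      have hcnt := SCover.cover_blocks P t d 𝒞 hsc ht hd hc
      calc ((Kc.image (SCover.blk P t d)).image (SCover.strip P t d)).card
          ≤ (Kc.image (SCover.blk P t d)).card := Finset.card_image_le
      _ ≤ 2 * d + 1 := hcnt
      _ ≤ 100 * d := by omega
    · intro p hpP hpcell hpnot
      have hpK : p ∈ Kc := Finset.mem_filter.2 ⟨hpP, hpcell, hpnot⟩
      refine ⟨SCover.strip P t d (SCover.blk P t d p), Finset.mem_image_of_mem _ hpK, ?_⟩
      have hlight := (SCover.kept_facts P t d 𝒞 hd hc hpP hpcell hpnot).1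
      have hmemX : p 0 ∈ SCover.Xf P t d (SCover.blk P t d p) :=
        Finset.mem_image_of_mem _ (Finset.mem_filter.2 ⟨hpP, rfl, hlight⟩)
      have hmemX' : p 0 ∈ ((SCover.Xf P t d (SCover.blk P t d p) : Set ℝ)) := hmemX
      constructor
      · exact csInf_le (SCover.Xf P t d (SCover.blk P t d p)).finite_toSet.bddBelow hmemX'
      · exact le_csSup (SCover.Xf P t d (SCover.blk P t d p)).finite_toSet.bddAbove hmemX'
  · -- strips are light
    intro S hS
    obtain ⟨p0, hp0f, rfl⟩ := Finset.mem_image.1 hS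
    rw [Finset.mem_filter] at hp0f
    have hw := SCover.strip_weight P t d ht hd hp0f.1 hp0f.2
    have he : {p ∈ (P : Set (Fin 2 → ℝ)) |
        inStrip (SCover.strip P t d (SCover.blk P t d p0)) p}
        = ↑(P.filter (fun q => inStrip (SCover.strip P t d (SCover.blk P t d p0)) q)) := by
      ext x; simp
    rw [he, Set.ncard_coe_finset]
    calc (P.filter (fun q => inStrip (SCover.strip P t d (SCover.blk P t d p0)) q)).card
        ≤ 3 * (t * d) := hw
    _ ≤ 100 * (t * d) := by omega
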